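/- arXiv:1404.5524 — 2 statements merged into one kernel-verified Lean document; each statement's English description precedes it below -/
import Mathlib

section
/- For every x⁰ ∈ ℝ^{2n+4} with all coordinates strictly positive, the stoichiometric compatibility class P = (x⁰ + column space of Γ) ∩ ℝ^{2n+4}_{≥0} contains exactly one steady state η, and all coordinates of η are strictly positive. -/
open Matrix Finset

noncomputable section

set_option linter.unreachableTactic false
set_option linter.unusedTactic false
set_option maxHeartbeats 1000000

/-- The `m`-th (1-based) standard basis vector of `ℝ^(2n+4)`. -/
def E (n : ℕ) (m : ℕ) : Fin (2*n+4) → ℝ := fun j => if (j : ℕ) + 1 = m then 1 else 0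

/-- The value of a vector `x ∈ ℝ^(2n+4)` at the (1-based) math index `m`. -/
def X (n : ℕ) (x : Fin (2*n+4) → ℝ) (m : ℕ) : ℝ :=
  if h : m - 1 < 2*n+4 then x ⟨m - 1, h⟩ else 0

/-- The stoichiometric matrix `Γ` of the processive `n`-site phosphorylation network;
columns are indexed 1-based as in the paper. -/
def Gamma (n : ℕ) : Matrix (Fin (2*n+4)) (Fin (2*n+2)) ℝ :=
  Matrix.of fun r c0 =>
    (let c := (c0 : ℕ) + 1
     if c = 1 then E n 5 - E n 1 - E n 3
     else if c ≤ n then E n (2*(c-1)+5) - E n (2*(c-1)+3)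
     else if c = n+1 then E n 1 + E n 4 - E n (2*n+3)
     else if c = n+2 then E n (2*n+4) - E n 2 - E n 4
     else if c ≤ 2*n+1 then E n (2*n+4-2*(c-(n+2))) - E n (2*n+6-2*(c-(n+2)))
     else E n 2 + E n 3 - E n 6) r

/-- The mass-action reaction rate function `R : ℝ^(2n+4) → ℝ^(2n+2)` of the processive
`n`-site phosphorylation network (coordinates indexed 1-based). -/
def Rvec (n : ℕ) (k l : ℕ → ℝ) (x : Fin (2*n+4) → ℝ) : Fin (2*n+2) → ℝ := fun a0 =>
  let a := (a0 : ℕ) + 1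
  if a = 1 then k 1 * X n x 1 * X n x 3 - k 2 * X n x 5
  else if a ≤ n then
    k (2*(a-1)+1) * X n x (2*(a-1)+3) - k (2*(a-1)+2) * X n x (2*(a-1)+5)
  else if a = n+1 then k (2*n+1) * X n x (2*n+3)
  else if a = n+2 then l (2*n+1) * X n x 2 * X n x 4 - l (2*n) * X n x (2*n+4)
  else if a ≤ 2*n+1 then
    l (2*(n-(a-(n+2)))+1) * X n x (2*(n-(a-(n+2)))+6)
      - l (2*(n-(a-(n+2)))) * X n x (2*(n-(a-(n+2)))+4)
  else l 1 * X n x 6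

def GP (n c : ℕ) : ℕ :=
  if c = 1 then 5
  else if c ≤ n then 2*(c-1)+5
  else if c = n+1 then 1
  else if c = n+2 then 2*n+4
  else if c ≤ 2*n+1 then 2*n+4-2*(c-(n+2))
  else 2

def GQ (n c : ℕ) : ℕ :=
  if c = 1 then 0
  else if c ≤ n then 0
  else if c = n+1 then 4
  else if c = n+2 then 0
  else if c ≤ 2*n+1 then 0
  else 3

def GS (n c : ℕ) : ℕ :=
  if c = 1 then 1
  else if c ≤ n then 2*(c-1)+3
  else if c = n+1 then 2*n+3
  else if c = n+2 then 2
  else if c ≤ 2*n+1 then 2*n+6-2*(c-(n+2))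
  else 6

def GT (n c : ℕ) : ℕ :=
  if c = 1 then 3
  else if c ≤ n then 0
  else if c = n+1 then 0
  else if c = n+2 then 4
  else if c ≤ 2*n+1 then 0
  else 0

def W (n : ℕ) (R : Fin (2*n+2) → ℝ) (a : ℕ) : ℝ :=
  if h : 1 ≤ a ∧ a - 1 < 2*n+2 then R ⟨a-1, h.2⟩ else 0

lemma Gamma_apply (n : ℕ) (r : Fin (2*n+4)) (c : Fin (2*n+2)) :
    Gamma n r c = (if (r:ℕ)+1 = GP n ((c:ℕ)+1) then (1:ℝ) else 0)
      + (if (r:ℕ)+1 = GQ n ((c:ℕ)+1) then 1 else 0)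
      - (if (r:ℕ)+1 = GS n ((c:ℕ)+1) then 1 else 0)
      - (if (r:ℕ)+1 = GT n ((c:ℕ)+1) then 1 else 0) := by
  simp only [Gamma, Matrix.of_apply, GP, GQ, GS, GT]
  split_ifs <;> simp only [Pi.sub_apply, Pi.add_apply, E] <;> split_ifs <;>
    first | contradiction | norm_num | omega

lemma sum_ind_eq (n : ℕ) (R : Fin (2*n+2) → ℝ) (f : ℕ → ℕ) (m c₀ : ℕ)
    (h0 : 1 ≤ c₀) (h2 : c₀ ≤ 2*n+2)
    (h : ∀ c, 1 ≤ c → c ≤ 2*n+2 → (m = f c ↔ c = c₀)) :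
    (∑ c : Fin (2*n+2), (if m = f ((c:ℕ)+1) then (1:ℝ) else 0) * R c) = W n R c₀ := by
  rw [Fintype.sum_eq_single (⟨c₀-1, by omega⟩ : Fin (2*n+2))]
  · simp only [Fin.val_mk]
    rw [show c₀-1+1 = c₀ by omega, if_pos ((h c₀ h0 h2).mpr rfl), one_mul, W,
      dif_pos ⟨h0, by omega⟩]
  · intro b hb
    rw [if_neg, zero_mul]
    intro hm
    have hlt := b.isLt
    have := (h ((b:ℕ)+1) (by omega) (by omega)).mp hm
    exact hb (Fin.ext (by simp only [Fin.val_mk]; omega))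

lemma sum_ind_zero (n : ℕ) (R : Fin (2*n+2) → ℝ) (f : ℕ → ℕ) (m : ℕ)
    (h : ∀ c, 1 ≤ c → c ≤ 2*n+2 → m ≠ f c) :
    (∑ c : Fin (2*n+2), (if m = f ((c:ℕ)+1) then (1:ℝ) else 0) * R c) = 0 := by
  apply Finset.sum_eq_zero
  intro b _
  have hlt := b.isLt
  rw [if_neg (h ((b:ℕ)+1) (by omega) (by omega)), zero_mul]

lemma mulVec_X (n : ℕ) (R : Fin (2*n+2) → ℝ) (m : ℕ) (h1 : 1 ≤ m) (h2 : m ≤ 2*n+4) :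
    X n ((Gamma n).mulVec R) m
      = (∑ c : Fin (2*n+2), (if m = GP n ((c:ℕ)+1) then (1:ℝ) else 0) * R c)
      + (∑ c : Fin (2*n+2), (if m = GQ n ((c:ℕ)+1) then (1:ℝ) else 0) * R c)
      - (∑ c : Fin (2*n+2), (if m = GS n ((c:ℕ)+1) then (1:ℝ) else 0) * R c)
      - (∑ c : Fin (2*n+2), (if m = GT n ((c:ℕ)+1) then (1:ℝ) else 0) * R c) := by
  rw [X, dif_pos (by omega : m - 1 < 2*n+4)]
  simp only [Matrix.mulVec, dotProduct, Gamma_apply, Fin.val_mk]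
  rw [show m - 1 + 1 = m by omega]
  rw [← Finset.sum_add_distrib, ← Finset.sum_sub_distrib, ← Finset.sum_sub_distrib]
  exact Finset.sum_congr rfl fun c _ => by ring

lemma comp1 (n : ℕ) (hn : 1 ≤ n) (R : Fin (2*n+2) → ℝ) :
    X n ((Gamma n).mulVec R) 1 = W n R (n+1) - W n R 1 := by
  rw [mulVec_X n R 1 (by omega) (by omega),
    sum_ind_eq n R (GP n) 1 (n+1) (by omega) (by omega)
      (by intro c hc1 hc2; unfold GP; split_ifs <;> first | omega | (simp only [false_iff, iff_false, true_iff, iff_true]; omega)),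
    sum_ind_zero n R (GQ n) 1 (by intro c hc1 hc2; unfold GQ; split_ifs <;> first | omega | (simp only [false_iff, iff_false, true_iff, iff_true]; omega)),
    sum_ind_eq n R (GS n) 1 1 (by omega) (by omega)
      (by intro c hc1 hc2; unfold GS; split_ifs <;> first | omega | (simp only [false_iff, iff_false, true_iff, iff_true]; omega)),
    sum_ind_zero n R (GT n) 1 (by intro c hc1 hc2; unfold GT; split_ifs <;> first | omega | (simp only [false_iff, iff_false, true_iff, iff_true]; omega))]
  ring

lemma comp2 (n : ℕ) (hn : 1 ≤ n) (R : Fin (2*n+2) → ℝ) :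
    X n ((Gamma n).mulVec R) 2 = W n R (2*n+2) - W n R (n+2) := by
  rw [mulVec_X n R 2 (by omega) (by omega),
    sum_ind_eq n R (GP n) 2 (2*n+2) (by omega) (by omega)
      (by intro c hc1 hc2; unfold GP; split_ifs <;> first | omega | (simp only [false_iff, iff_false, true_iff, iff_true]; omega)),
    sum_ind_zero n R (GQ n) 2 (by intro c hc1 hc2; unfold GQ; split_ifs <;> first | omega | (simp only [false_iff, iff_false, true_iff, iff_true]; omega)),
    sum_ind_eq n R (GS n) 2 (n+2) (by omega) (by omega)
      (by intro c hc1 hc2; unfold GS; split_ifs <;> first | omega | (simp only [false_iff, iff_false, true_iff, iff_true]; omega)),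
    sum_ind_zero n R (GT n) 2 (by intro c hc1 hc2; unfold GT; split_ifs <;> first | omega | (simp only [false_iff, iff_false, true_iff, iff_true]; omega))]
  ring

lemma comp3 (n : ℕ) (hn : 1 ≤ n) (R : Fin (2*n+2) → ℝ) :
    X n ((Gamma n).mulVec R) 3 = W n R (2*n+2) - W n R 1 := by
  rw [mulVec_X n R 3 (by omega) (by omega),
    sum_ind_zero n R (GP n) 3 (by intro c hc1 hc2; unfold GP; split_ifs <;> first | omega | (simp only [false_iff, iff_false, true_iff, iff_true]; omega)),
    sum_ind_eq n R (GQ n) 3 (2*n+2) (by omega) (by omega)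
      (by intro c hc1 hc2; unfold GQ; split_ifs <;> first | omega | (simp only [false_iff, iff_false, true_iff, iff_true]; omega)),
    sum_ind_zero n R (GS n) 3 (by intro c hc1 hc2; unfold GS; split_ifs <;> first | omega | (simp only [false_iff, iff_false, true_iff, iff_true]; omega)),
    sum_ind_eq n R (GT n) 3 1 (by omega) (by omega)
      (by intro c hc1 hc2; unfold GT; split_ifs <;> first | omega | (simp only [false_iff, iff_false, true_iff, iff_true]; omega))]
  ring

lemma comp4 (n : ℕ) (hn : 1 ≤ n) (R : Fin (2*n+2) → ℝ) :
    X n ((Gamma n).mulVec R) 4 = W n R (n+1) - W n R (n+2) := by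
  rw [mulVec_X n R 4 (by omega) (by omega),
    sum_ind_zero n R (GP n) 4 (by intro c hc1 hc2; unfold GP; split_ifs <;> first | omega | (simp only [false_iff, iff_false, true_iff, iff_true]; omega)),
    sum_ind_eq n R (GQ n) 4 (n+1) (by omega) (by omega)
      (by intro c hc1 hc2; unfold GQ; split_ifs <;> first | omega | (simp only [false_iff, iff_false, true_iff, iff_true]; omega)),
    sum_ind_zero n R (GS n) 4 (by intro c hc1 hc2; unfold GS; split_ifs <;> first | omega | (simp only [false_iff, iff_false, true_iff, iff_true]; omega)),
    sum_ind_eq n R (GT n) 4 (n+2) (by omega) (by omega)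
      (by intro c hc1 hc2; unfold GT; split_ifs <;> first | omega | (simp only [false_iff, iff_false, true_iff, iff_true]; omega))]
  ring

lemma comp_odd (n : ℕ) (hn : 1 ≤ n) (R : Fin (2*n+2) → ℝ) (i : ℕ) (hi1 : 1 ≤ i) (hi2 : i ≤ n) :
    X n ((Gamma n).mulVec R) (2*i+3) = W n R i - W n R (i+1) := by
  rw [mulVec_X n R (2*i+3) (by omega) (by omega),
    sum_ind_eq n R (GP n) (2*i+3) i (by omega) (by omega)
      (by intro c hc1 hc2; unfold GP; split_ifs <;> first | omega | (simp only [false_iff, iff_false, true_iff, iff_true]; omega)),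
    sum_ind_zero n R (GQ n) (2*i+3) (by intro c hc1 hc2; unfold GQ; split_ifs <;> first | omega | (simp only [false_iff, iff_false, true_iff, iff_true]; omega)),
    sum_ind_eq n R (GS n) (2*i+3) (i+1) (by omega) (by omega)
      (by intro c hc1 hc2; unfold GS; split_ifs <;> first | omega | (simp only [false_iff, iff_false, true_iff, iff_true]; omega)),
    sum_ind_zero n R (GT n) (2*i+3) (by intro c hc1 hc2; unfold GT; split_ifs <;> first | omega | (simp only [false_iff, iff_false, true_iff, iff_true]; omega))]
  ring

lemma comp_even (n : ℕ) (hn : 1 ≤ n) (R : Fin (2*n+2) → ℝ) (j : ℕ) (hj1 : 1 ≤ j) (hj2 : j ≤ n) :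
    X n ((Gamma n).mulVec R) (2*j+4) = W n R (2*n+2-j) - W n R (2*n+3-j) := by
  rw [mulVec_X n R (2*j+4) (by omega) (by omega),
    sum_ind_eq n R (GP n) (2*j+4) (2*n+2-j) (by omega) (by omega)
      (by intro c hc1 hc2; unfold GP; split_ifs <;> first | omega | (simp only [false_iff, iff_false, true_iff, iff_true]; omega)),
    sum_ind_zero n R (GQ n) (2*j+4) (by intro c hc1 hc2; unfold GQ; split_ifs <;> first | omega | (simp only [false_iff, iff_false, true_iff, iff_true]; omega)),
    sum_ind_eq n R (GS n) (2*j+4) (2*n+3-j) (by omega) (by omega)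
      (by intro c hc1 hc2; unfold GS; split_ifs <;> first | omega | (simp only [false_iff, iff_false, true_iff, iff_true]; omega)),
    sum_ind_zero n R (GT n) (2*j+4) (by intro c hc1 hc2; unfold GT; split_ifs <;> first | omega | (simp only [false_iff, iff_false, true_iff, iff_true]; omega))]
  ring

lemma steady_of_const (n : ℕ) (hn : 1 ≤ n) (R : Fin (2*n+2) → ℝ) (v : ℝ)
    (h : ∀ a, 1 ≤ a → a ≤ 2*n+2 → W n R a = v) : (Gamma n).mulVec R = 0 := by
  funext r
  have hr := r.isLt
  have key : X n ((Gamma n).mulVec R) ((r:ℕ)+1) = 0 := by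
    set m := (r:ℕ)+1 with hm
    by_cases h1 : m = 1
    · rw [h1, comp1 n hn R, h (n+1) (by omega) (by omega), h 1 (by omega) (by omega)]; ring
    · by_cases h2 : m = 2
      · rw [h2, comp2 n hn R, h (2*n+2) (by omega) (by omega), h (n+2) (by omega) (by omega)]
        ring
      · by_cases h3 : m = 3
        · rw [h3, comp3 n hn R, h (2*n+2) (by omega) (by omega), h 1 (by omega) (by omega)]
          ring
        · by_cases h4 : m = 4
          · rw [h4, comp4 n hn R, h (n+1) (by omega) (by omega), h (n+2) (by omega) (by omega)]
            ring
          · by_cases hpar : m % 2 = 1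
            · have hm5 : 5 ≤ m := by omega
              have : m = 2*((m-3)/2)+3 := by omega
              rw [this, comp_odd n hn R ((m-3)/2) (by omega) (by omega),
                h ((m-3)/2) (by omega) (by omega), h ((m-3)/2+1) (by omega) (by omega)]
              ring
            · have hm6 : 6 ≤ m := by omega
              have : m = 2*((m-4)/2)+4 := by omega
              rw [this, comp_even n hn R ((m-4)/2) (by omega) (by omega),
                h (2*n+2-(m-4)/2) (by omega) (by omega), h (2*n+3-(m-4)/2) (by omega) (by omega)]
              ring
  rw [X, dif_pos (by omega)] at key
  simpa using key

lemma const_of_steady (n : ℕ) (hn : 1 ≤ n) (R : Fin (2*n+2) → ℝ)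
    (h : (Gamma n).mulVec R = 0) :
    ∀ a, 1 ≤ a → a ≤ 2*n+2 → W n R a = W n R 1 := by
  have hz : ∀ m, X n ((Gamma n).mulVec R) m = 0 := by
    intro m; rw [h, X]; split <;> simp
  have step : ∀ a, 2 ≤ a → a ≤ 2*n+2 → W n R a = W n R (a-1) := by
    intro a ha1 ha2
    by_cases hc1 : a ≤ n+1
    · have := hz (2*(a-1)+3)
      rw [comp_odd n hn R (a-1) (by omega) (by omega), show a-1+1 = a by omega] at this
      linarith
    · by_cases hc2 : a = n+2
      · have := hz 4
        rw [comp4 n hn R, show n+1 = a-1 by omega, show n+2 = a by omega] at this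
        linarith
      · have := hz (2*(2*n+3-a)+4)
        rw [comp_even n hn R (2*n+3-a) (by omega) (by omega),
          show 2*n+2-(2*n+3-a) = a-1 by omega, show 2*n+3-(2*n+3-a) = a by omega] at this
        linarith
  intro a
  induction a with
  | zero => omega
  | succ b ih =>
    intro _ hb2
    by_cases hb : b = 0
    · subst hb; rfl
    · rw [show b = b+1-1 by omega] at ih
      rw [step (b+1) (by omega) hb2, ih (by omega) (by omega)]

lemma telescope_odd (n : ℕ) (hn : 1 ≤ n) (u : Fin (2*n+2) → ℝ) :
    ∑ i ∈ Icc 1 n, X n ((Gamma n).mulVec u) (2*i+3) = W n u 1 - W n u (n+1) := by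
  rw [Finset.sum_congr rfl (fun i hi => comp_odd n hn u i (mem_Icc.mp hi).1 (mem_Icc.mp hi).2)]
  rw [show Icc 1 n = Ico 1 (n+1) from (Finset.Ico_add_one_right_eq_Icc 1 n).symm, Finset.sum_Ico_eq_sum_range]
  simp only [Nat.add_sub_cancel]
  rw [Finset.sum_congr rfl (fun t _ => by rw [show 1+t = t+1 by omega])]
  exact Finset.sum_range_sub' (fun t => W n u (t+1)) n

lemma telescope_even (n : ℕ) (hn : 1 ≤ n) (u : Fin (2*n+2) → ℝ) :
    ∑ j ∈ Icc 1 n, X n ((Gamma n).mulVec u) (2*j+4) = W n u (n+2) - W n u (2*n+2) := by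
  rw [Finset.sum_congr rfl (fun j hj => comp_even n hn u j (mem_Icc.mp hj).1 (mem_Icc.mp hj).2)]
  rw [show Icc 1 n = Ico 1 (n+1) from (Finset.Ico_add_one_right_eq_Icc 1 n).symm, Finset.sum_Ico_eq_sum_range]
  simp only [Nat.add_sub_cancel]
  rw [Finset.sum_congr rfl (fun t _ => by
    rw [show 2*n+2-(1+t) = 2*n+1-t by omega, show 2*n+3-(1+t) = 2*n+2-t by omega])]
  have := Finset.sum_range_sub (fun t => W n u (2*n+2-t)) n
  rw [Finset.sum_congr rfl (fun t _ => by rw [show 2*n+2-(t+1) = 2*n+1-t by omega]) ] at this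
  rw [this, show 2*n+2-n = n+2 by omega, show 2*n+2-0 = 2*n+2 by omega]

lemma consK (n : ℕ) (hn : 1 ≤ n) (u : Fin (2*n+2) → ℝ) :
    X n ((Gamma n).mulVec u) 1 + ∑ i ∈ Icc 1 n, X n ((Gamma n).mulVec u) (2*i+3) = 0 := by
  rw [comp1 n hn u, telescope_odd n hn u]; ring

lemma consF (n : ℕ) (hn : 1 ≤ n) (u : Fin (2*n+2) → ℝ) :
    X n ((Gamma n).mulVec u) 2 + ∑ j ∈ Icc 1 n, X n ((Gamma n).mulVec u) (2*j+4) = 0 := by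
  rw [comp2 n hn u, telescope_even n hn u]; ring

lemma consS (n : ℕ) (hn : 1 ≤ n) (u : Fin (2*n+2) → ℝ) :
    X n ((Gamma n).mulVec u) 3 + X n ((Gamma n).mulVec u) 4
      + ∑ i ∈ Icc 1 n, X n ((Gamma n).mulVec u) (2*i+3)
      + ∑ j ∈ Icc 1 n, X n ((Gamma n).mulVec u) (2*j+4) = 0 := by
  rw [comp3 n hn u, comp4 n hn u, telescope_odd n hn u, telescope_even n hn u]; ring

lemma X_sub (n : ℕ) (x y : Fin (2*n+4) → ℝ) (m : ℕ) :
    X n (x - y) m = X n x m - X n y m := by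
  unfold X; split <;> simp

lemma X_apply (n : ℕ) (x : Fin (2*n+4) → ℝ) (r : Fin (2*n+4)) :
    x r = X n x ((r:ℕ)+1) := by
  rw [X, dif_pos (by omega)]
  congr 1

def alphaAux (n : ℕ) (k : ℕ → ℝ) : ℕ → ℝ
  | 0 => 1 / k (2*n+1)
  | (t+1) => (1 + k (2*(n-t-1)+2) * alphaAux n k t) / k (2*(n-t-1)+1)

def alphaC (n : ℕ) (k : ℕ → ℝ) (i : ℕ) : ℝ := alphaAux n k (n - i)

lemma alphaC_n (n : ℕ) (k : ℕ → ℝ) : alphaC n k n = 1 / k (2*n+1) := by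
  rw [alphaC, Nat.sub_self, alphaAux]

lemma alphaC_rec (n : ℕ) (k : ℕ → ℝ) (i : ℕ) (h1 : 1 ≤ i) (h2 : i + 1 ≤ n) :
    alphaC n k i = (1 + k (2*i+2) * alphaC n k (i+1)) / k (2*i+1) := by
  rw [alphaC, show n - i = (n-i-1)+1 by omega]
  show (1 + k (2*(n-(n-i-1)-1)+2) * alphaAux n k (n-i-1)) / k (2*(n-(n-i-1)-1)+1) = _
  rw [show n-(n-i-1)-1 = i by omega, show n-i-1 = n-(i+1) by omega, alphaC]

lemma alphaC_pos (n : ℕ) (hn : 1 ≤ n) (k : ℕ → ℝ) (hk : ∀ i, 1 ≤ i → i ≤ 2*n+1 → 0 < k i) :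
    ∀ i, 1 ≤ i → i ≤ n → 0 < alphaC n k i := by
  have aux : ∀ t, t ≤ n - 1 → 0 < alphaAux n k t := by
    intro t
    induction t with
    | zero => intro _; simp only [alphaAux]
              exact div_pos one_pos (hk (2*n+1) (by omega) (by omega))
    | succ s ih =>
      intro hs
      simp only [alphaAux]
      have h1 : 0 < k (2*(n-s-1)+2) := hk _ (by omega) (by omega)
      have h2 : 0 < k (2*(n-s-1)+1) := hk _ (by omega) (by omega)
      have h3 : 0 < alphaAux n k s := ih (by omega)
      positivity
  intro i hi1 hi2
  exact aux (n - i) (by omega)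

def betaC (l : ℕ → ℝ) : ℕ → ℝ
  | 0 => 0
  | 1 => 1 / l 1
  | (j+2) => (1 + l (2*j+2) * betaC l (j+1)) / l (2*j+3)

lemma betaC_rec (l : ℕ → ℝ) (j : ℕ) (h1 : 1 ≤ j) :
    betaC l (j+1) = (1 + l (2*j) * betaC l j) / l (2*j+1) := by
  obtain ⟨j', rfl⟩ : ∃ j', j = j'+1 := ⟨j-1, by omega⟩
  show (1 + l (2*j'+2) * betaC l (j'+1)) / l (2*j'+3) = _
  rw [show 2*(j'+1) = 2*j'+2 by ring, show 2*j'+2+1 = 2*j'+3 by ring]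

lemma betaC_pos (n : ℕ) (hn : 1 ≤ n) (l : ℕ → ℝ) (hl : ∀ i, 1 ≤ i → i ≤ 2*n+1 → 0 < l i) :
    ∀ j, 1 ≤ j → j ≤ n → 0 < betaC l j := by
  intro j
  induction j with
  | zero => omega
  | succ m ih =>
    intro _ hj2
    by_cases hm : m = 0
    · subst hm
      show 0 < 1 / l 1
      exact div_pos one_pos (hl 1 (by omega) (by omega))
    · rw [betaC_rec l m (by omega)]
      have h1 : 0 < l (2*m) := hl _ (by omega) (by omega)
      have h2 : 0 < l (2*m+1) := hl _ (by omega) (by omega)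
      have h3 : 0 < betaC l m := ih (by omega) (by omega)
      positivity

lemma W_Rvec (n : ℕ) (k l : ℕ → ℝ) (x : Fin (2*n+4) → ℝ) (a : ℕ) (h1 : 1 ≤ a) (h2 : a ≤ 2*n+2) :
    W n (Rvec n k l x) a =
      (if a = 1 then k 1 * X n x 1 * X n x 3 - k 2 * X n x 5
       else if a ≤ n then k (2*(a-1)+1) * X n x (2*(a-1)+3) - k (2*(a-1)+2) * X n x (2*(a-1)+5)
       else if a = n+1 then k (2*n+1) * X n x (2*n+3)
       else if a = n+2 then l (2*n+1) * X n x 2 * X n x 4 - l (2*n) * X n x (2*n+4)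
       else if a ≤ 2*n+1 then l (2*(n-(a-(n+2)))+1) * X n x (2*(n-(a-(n+2)))+6)
         - l (2*(n-(a-(n+2)))) * X n x (2*(n-(a-(n+2)))+4)
       else l 1 * X n x 6) := by
  rw [W, dif_pos ⟨h1, by omega⟩]
  simp only [Rvec, Fin.val_mk]
  rw [show a-1+1 = a by omega]

lemma WR1 (n : ℕ) (hn : 1 ≤ n) (k l : ℕ → ℝ) (x : Fin (2*n+4) → ℝ) :
    W n (Rvec n k l x) 1 = k 1 * X n x 1 * X n x 3 - k 2 * X n x 5 := by
  rw [W_Rvec n k l x 1 (by omega) (by omega), if_pos rfl]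

lemma WRmid (n : ℕ) (hn : 1 ≤ n) (k l : ℕ → ℝ) (x : Fin (2*n+4) → ℝ) (i : ℕ)
    (h1 : 1 ≤ i) (h2 : i+1 ≤ n) :
    W n (Rvec n k l x) (i+1)
      = k (2*i+1) * X n x (2*i+3) - k (2*i+2) * X n x (2*i+5) := by
  rw [W_Rvec n k l x (i+1) (by omega) (by omega), if_neg (by omega), if_pos (by omega)]
  rw [show i+1-1 = i from rfl]

lemma WRn1 (n : ℕ) (hn : 1 ≤ n) (k l : ℕ → ℝ) (x : Fin (2*n+4) → ℝ) :
    W n (Rvec n k l x) (n+1) = k (2*n+1) * X n x (2*n+3) := by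
  rw [W_Rvec n k l x (n+1) (by omega) (by omega), if_neg (by omega), if_neg (by omega),
    if_pos rfl]

lemma WRn2 (n : ℕ) (hn : 1 ≤ n) (k l : ℕ → ℝ) (x : Fin (2*n+4) → ℝ) :
    W n (Rvec n k l x) (n+2)
      = l (2*n+1) * X n x 2 * X n x 4 - l (2*n) * X n x (2*n+4) := by
  rw [W_Rvec n k l x (n+2) (by omega) (by omega), if_neg (by omega), if_neg (by omega),
    if_neg (by omega), if_pos rfl]

lemma WRback (n : ℕ) (hn : 1 ≤ n) (k l : ℕ → ℝ) (x : Fin (2*n+4) → ℝ) (j : ℕ)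
    (h1 : 1 ≤ j) (h2 : j+1 ≤ n) :
    W n (Rvec n k l x) (2*n+2-j)
      = l (2*j+1) * X n x (2*j+6) - l (2*j) * X n x (2*j+4) := by
  rw [W_Rvec n k l x (2*n+2-j) (by omega) (by omega), if_neg (by omega), if_neg (by omega),
    if_neg (by omega), if_neg (by omega), if_pos (by omega)]
  rw [show n-(2*n+2-j-(n+2)) = j by omega]

lemma WRlast (n : ℕ) (hn : 1 ≤ n) (k l : ℕ → ℝ) (x : Fin (2*n+4) → ℝ) :
    W n (Rvec n k l x) (2*n+2) = l 1 * X n x 6 := by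
  rw [W_Rvec n k l x (2*n+2) (by omega) (by omega), if_neg (by omega), if_neg (by omega),
    if_neg (by omega), if_neg (by omega), if_neg (by omega)]

lemma root_exists_unique (c d A B K F S : ℝ) (hc : 0 < c) (hd : 0 < d) (hA : 0 < A)
    (hB : 0 < B) (hK : 0 < K) (hF : 0 < F) (hS : 0 < S) :
    ∃ v : ℝ, (0 < v ∧ A*v < K ∧ B*v < F ∧
        c*v/(K-A*v) + d*v/(F-B*v) + (A+B)*v = S) ∧
      ∀ v' : ℝ, 0 ≤ v' → A*v' < K → B*v' < F →
        c*v'/(K-A*v') + d*v'/(F-B*v') + (A+B)*v' = S → v' = v := by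
  set g : ℝ → ℝ := fun v => c*v/(K-A*v) + d*v/(F-B*v) + (A+B)*v with hg
  set M : ℝ := min (K/A) (F/B) with hM
  set w1 : ℝ := S*K/(c+S*A) with hw1
  set w2 : ℝ := S*F/(d+S*B) with hw2
  set w : ℝ := min w1 w2 with hw
  have hw1pos : 0 < w1 := by rw [hw1]; positivity
  have hw2pos : 0 < w2 := by rw [hw2]; positivity
  have hwpos : 0 < w := lt_min hw1pos hw2pos
  have hw1lt : w1 < K/A := by
    rw [hw1, div_lt_div_iff₀ (by positivity) hA]
    nlinarith
  have hw2lt : w2 < F/B := by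
    rw [hw2, div_lt_div_iff₀ (by positivity) hB]
    nlinarith
  have hwM : w < M := lt_min (lt_of_le_of_lt (min_le_left _ _) hw1lt)
    (lt_of_le_of_lt (min_le_right _ _) hw2lt)
  have hKw : 0 < K - A*w := by
    have h : w < K/A := lt_of_lt_of_le hwM (min_le_left _ _)
    rw [lt_div_iff₀ hA] at h; linarith
  have hFw : 0 < F - B*w := by
    have h : w < F/B := lt_of_lt_of_le hwM (min_le_right _ _)
    rw [lt_div_iff₀ hB] at h; linarith
  have hmono : StrictMonoOn g (Set.Ico 0 M) := by
    intro a ha b hb hab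
    have haK : 0 < K - A*a := by
      have h : a < K/A := lt_of_lt_of_le ha.2 (min_le_left _ _)
      rw [lt_div_iff₀ hA] at h; linarith
    have hbK : 0 < K - A*b := by
      have h : b < K/A := lt_of_lt_of_le hb.2 (min_le_left _ _)
      rw [lt_div_iff₀ hA] at h; linarith
    have haF : 0 < F - B*a := by
      have h : a < F/B := lt_of_lt_of_le ha.2 (min_le_right _ _)
      rw [lt_div_iff₀ hB] at h; linarith
    have hbF : 0 < F - B*b := by
      have h : b < F/B := lt_of_lt_of_le hb.2 (min_le_right _ _)
      rw [lt_div_iff₀ hB] at h; linarith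
    have ha0 := ha.1
    have h1 : c*a/(K-A*a) < c*b/(K-A*b) := by
      rw [div_lt_div_iff₀ haK hbK]
      nlinarith [mul_pos (mul_pos hc (sub_pos.mpr hab)) hK]
    have h2 : d*a/(F-B*a) < d*b/(F-B*b) := by
      rw [div_lt_div_iff₀ haF hbF]
      nlinarith [mul_pos (mul_pos hd (sub_pos.mpr hab)) hF]
    have h3 : (A+B)*a < (A+B)*b := by nlinarith
    show c*a/(K-A*a) + d*a/(F-B*a) + (A+B)*a < c*b/(K-A*b) + d*b/(F-B*b) + (A+B)*b
    linarith
  have hcont : ContinuousOn g (Set.Icc 0 w) := by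
    apply ContinuousOn.add
    apply ContinuousOn.add
    · apply ContinuousOn.div (by fun_prop) (by fun_prop)
      intro x hx
      have h1 := hx.1
      have h2 := hx.2
      nlinarith
    · apply ContinuousOn.div (by fun_prop) (by fun_prop)
      intro x hx
      have h1 := hx.1
      have h2 := hx.2
      nlinarith
    · fun_prop
  have hg0 : g 0 = 0 := by
    show c*0/(K-A*0) + d*0/(F-B*0) + (A+B)*0 = 0
    simp
  have hgw : S ≤ g w := by
    have hterm1 : 0 ≤ c*w/(K-A*w) := by positivity
    have hterm2 : 0 ≤ d*w/(F-B*w) := by positivity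
    have hterm3 : 0 ≤ (A+B)*w := by positivity
    have key : S ≤ c*w/(K-A*w) ∨ S ≤ d*w/(F-B*w) := by
      rcases le_total w1 w2 with h | h
      · left
        have hww : w = w1 := min_eq_left h
        have hne : c+S*A ≠ 0 := by positivity
        have heq : c*w = S*(K-A*w) := by
          rw [hww, hw1]; field_simp; ring
        rw [le_div_iff₀ hKw]; nlinarith
      · right
        have hww : w = w2 := min_eq_right h
        have hne : d+S*B ≠ 0 := by positivity
        have heq : d*w = S*(F-B*w) := by
          rw [hww, hw2]; field_simp; ring
        rw [le_div_iff₀ hFw]; nlinarith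
    show S ≤ c*w/(K-A*w) + d*w/(F-B*w) + (A+B)*w
    rcases key with h | h <;> linarith
  have hIVT := intermediate_value_Icc (le_of_lt hwpos) hcont
  have hSmem : S ∈ Set.Icc (g 0) (g w) := ⟨by rw [hg0]; exact le_of_lt hS, hgw⟩
  obtain ⟨v, hvmem, hgv⟩ := hIVT hSmem
  have hv0 : 0 < v := by
    rcases lt_or_eq_of_le hvmem.1 with h | h
    · exact h
    · exfalso
      rw [← h] at hgv
      rw [hg0] at hgv
      linarith
  have hvK : A*v < K := by
    have h : v < K/A := lt_of_le_of_lt hvmem.2 (lt_of_lt_of_le hwM (min_le_left _ _))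
    rw [lt_div_iff₀ hA] at h; linarith
  have hvF : B*v < F := by
    have h : v < F/B := lt_of_le_of_lt hvmem.2 (lt_of_lt_of_le hwM (min_le_right _ _))
    rw [lt_div_iff₀ hB] at h; linarith
  have hvM : v < M := lt_of_le_of_lt hvmem.2 hwM
  refine ⟨v, ⟨hv0, hvK, hvF, hgv⟩, ?_⟩
  intro v' h0 hAK hBF heq
  have hv'M : v' < M := lt_min ((lt_div_iff₀ hA).mpr (by linarith))
    ((lt_div_iff₀ hB).mpr (by linarith))
  have hgv' : g v' = S := heq
  exact hmono.injOn ⟨h0, hv'M⟩ ⟨hvmem.1, hvM⟩ (hgv'.trans hgv.symm)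

def etaVec (n : ℕ) (k l : ℕ → ℝ) (K F c d A B v : ℝ) : Fin (2*n+4) → ℝ := fun r =>
  if (r:ℕ)+1 = 1 then K - A*v
  else if (r:ℕ)+1 = 2 then F - B*v
  else if (r:ℕ)+1 = 3 then c*v/(K-A*v)
  else if (r:ℕ)+1 = 4 then d*v/(F-B*v)
  else if ((r:ℕ)+1) % 2 = 1 then alphaC n k (((r:ℕ)+1-3)/2) * v
  else betaC l (((r:ℕ)+1-4)/2) * v

lemma X_eta (n : ℕ) (k l : ℕ → ℝ) (K F c d A B v : ℝ) (m : ℕ) (h1 : 1 ≤ m)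
    (h2 : m ≤ 2*n+4) :
    X n (etaVec n k l K F c d A B v) m =
      (if m = 1 then K - A*v
       else if m = 2 then F - B*v
       else if m = 3 then c*v/(K-A*v)
       else if m = 4 then d*v/(F-B*v)
       else if m % 2 = 1 then alphaC n k ((m-3)/2) * v
       else betaC l ((m-4)/2) * v) := by
  rw [X, dif_pos (by omega)]
  simp only [etaVec, Fin.val_mk]
  rw [show m-1+1 = m by omega]

lemma X_eta1 (n : ℕ) (k l : ℕ → ℝ) (K F c d A B v : ℝ) :
    X n (etaVec n k l K F c d A B v) 1 = K - A*v := by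
  rw [X_eta n k l K F c d A B v 1 (by omega) (by omega), if_pos rfl]

lemma X_eta2 (n : ℕ) (k l : ℕ → ℝ) (K F c d A B v : ℝ) :
    X n (etaVec n k l K F c d A B v) 2 = F - B*v := by
  rw [X_eta n k l K F c d A B v 2 (by omega) (by omega), if_neg (by omega), if_pos rfl]

lemma X_eta3 (n : ℕ) (k l : ℕ → ℝ) (K F c d A B v : ℝ) :
    X n (etaVec n k l K F c d A B v) 3 = c*v/(K-A*v) := by
  rw [X_eta n k l K F c d A B v 3 (by omega) (by omega), if_neg (by omega),
    if_neg (by omega), if_pos rfl]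

lemma X_eta4 (n : ℕ) (k l : ℕ → ℝ) (K F c d A B v : ℝ) :
    X n (etaVec n k l K F c d A B v) 4 = d*v/(F-B*v) := by
  rw [X_eta n k l K F c d A B v 4 (by omega) (by omega), if_neg (by omega),
    if_neg (by omega), if_neg (by omega), if_pos rfl]

lemma X_eta_odd (n : ℕ) (k l : ℕ → ℝ) (K F c d A B v : ℝ) (i : ℕ) (h1 : 1 ≤ i)
    (h2 : i ≤ n) :
    X n (etaVec n k l K F c d A B v) (2*i+3) = alphaC n k i * v := by
  rw [X_eta n k l K F c d A B v (2*i+3) (by omega) (by omega), if_neg (by omega),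
    if_neg (by omega), if_neg (by omega), if_neg (by omega), if_pos (by omega),
    show (2*i+3-3)/2 = i by omega]

lemma X_eta_even (n : ℕ) (k l : ℕ → ℝ) (K F c d A B v : ℝ) (j : ℕ) (h1 : 1 ≤ j)
    (h2 : j ≤ n) :
    X n (etaVec n k l K F c d A B v) (2*j+4) = betaC l j * v := by
  rw [X_eta n k l K F c d A B v (2*j+4) (by omega) (by omega), if_neg (by omega),
    if_neg (by omega), if_neg (by omega), if_neg (by omega), if_neg (by omega),
    show (2*j+4-4)/2 = j by omega]

lemma eta_steady (n : ℕ) (hn : 1 ≤ n) (k l : ℕ → ℝ)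
    (hk : ∀ i, 1 ≤ i → i ≤ 2*n+1 → 0 < k i)
    (hl : ∀ i, 1 ≤ i → i ≤ 2*n+1 → 0 < l i)
    (K F c d A B v : ℝ)
    (hKv : K - A*v ≠ 0) (hFv : F - B*v ≠ 0)
    (hcdef : k 1 * c = 1 + k 2 * alphaC n k 1)
    (hddef : l (2*n+1) * d = 1 + l (2*n) * betaC l n) :
    ∀ a, 1 ≤ a → a ≤ 2*n+2 →
      W n (Rvec n k l (etaVec n k l K F c d A B v)) a = v := by
  set η := etaVec n k l K F c d A B v with hη
  intro a ha1 ha2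
  by_cases h1 : a = 1
  · subst h1
    rw [WR1 n hn k l η, hη, X_eta1, X_eta3, show (5:ℕ) = 2*1+3 by norm_num,
      X_eta_odd n k l K F c d A B v 1 (by omega) (by omega)]
    have e1 : k 1 * (K - A*v) * (c*v/(K-A*v)) = k 1 * c * v := by
      field_simp
    rw [e1]
    linear_combination v * hcdef
  · by_cases h2 : a ≤ n
    · rw [show a = (a-1)+1 by omega,
        WRmid n hn k l η (a-1) (by omega) (by omega), hη,
        X_eta_odd n k l K F c d A B v (a-1) (by omega) (by omega),
        show 2*(a-1)+5 = 2*(a-1+1)+3 by omega,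
        X_eta_odd n k l K F c d A B v (a-1+1) (by omega) (by omega)]
      have hrec : k (2*(a-1)+1) * alphaC n k (a-1)
          = 1 + k (2*(a-1)+2) * alphaC n k (a-1+1) := by
        rw [alphaC_rec n k (a-1) (by omega) (by omega)]
        have hne := ne_of_gt (hk (2*(a-1)+1) (by omega) (by omega))
        field_simp
      linear_combination v * hrec
    · by_cases h3 : a = n+1
      · subst h3
        rw [WRn1 n hn k l η, hη,
          X_eta_odd n k l K F c d A B v n (by omega) (by omega), alphaC_n]
        have := hk (2*n+1) (by omega) (by omega)
        field_simp
      · by_cases h4 : a = n+2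
        · subst h4
          rw [WRn2 n hn k l η, hη, X_eta2, X_eta4,
            X_eta_even n k l K F c d A B v n (by omega) (by omega)]
          have e1 : l (2*n+1) * (F - B*v) * (d*v/(F-B*v)) = l (2*n+1) * d * v := by
            field_simp
          rw [e1]
          linear_combination v * hddef
        · by_cases h5 : a ≤ 2*n+1
          · rw [show a = 2*n+2-(2*n+2-a) by omega,
              WRback n hn k l η (2*n+2-a) (by omega) (by omega), hη,
              show 2*(2*n+2-a)+6 = 2*(2*n+2-a+1)+4 by omega,
              X_eta_even n k l K F c d A B v (2*n+2-a+1) (by omega) (by omega),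
              X_eta_even n k l K F c d A B v (2*n+2-a) (by omega) (by omega)]
            have hrec : l (2*(2*n+2-a)+1) * betaC l (2*n+2-a+1)
                = 1 + l (2*(2*n+2-a)) * betaC l (2*n+2-a) := by
              rw [betaC_rec l (2*n+2-a) (by omega)]
              have hne := ne_of_gt (hl (2*(2*n+2-a)+1) (by omega) (by omega))
              field_simp
            linear_combination v * hrec
          · have h6 : a = 2*n+2 := by omega
            subst h6
            rw [WRlast n hn k l η, hη, show (6:ℕ) = 2*1+4 by norm_num,
              X_eta_even n k l K F c d A B v 1 (by omega) (by omega)]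
            have hb1 : betaC l 1 = 1 / l 1 := rfl
            rw [hb1]
            have := hl 1 (by omega) (by omega)
            field_simp

def uVec (n : ℕ) (y : Fin (2*n+4) → ℝ) : Fin (2*n+2) → ℝ := fun c0 =>
  if (c0:ℕ)+1 ≤ n+1 then -(X n y 3) - ∑ j ∈ Icc 1 ((c0:ℕ)+1-1), X n y (2*j+3)
  else -(X n y 2) - ∑ j ∈ Icc (2*n+3-((c0:ℕ)+1)) n, X n y (2*j+4)

lemma W_uVec_low (n : ℕ) (y : Fin (2*n+4) → ℝ) (a : ℕ) (h1 : 1 ≤ a) (h2 : a ≤ n+1) :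
    W n (uVec n y) a = -(X n y 3) - ∑ j ∈ Icc 1 (a-1), X n y (2*j+3) := by
  rw [W, dif_pos ⟨h1, by omega⟩]
  simp only [uVec, Fin.val_mk]
  rw [if_pos (by omega), show a-1+1 = a by omega]

lemma W_uVec_high (n : ℕ) (y : Fin (2*n+4) → ℝ) (a : ℕ) (h1 : n+2 ≤ a) (h2 : a ≤ 2*n+2) :
    W n (uVec n y) a = -(X n y 2) - ∑ j ∈ Icc (2*n+3-a) n, X n y (2*j+4) := by
  rw [W, dif_pos ⟨by omega, by omega⟩]
  simp only [uVec, Fin.val_mk]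
  rw [if_neg (by omega), show a-1+1 = a by omega]

lemma range_of_cons (n : ℕ) (hn : 1 ≤ n) (y : Fin (2*n+4) → ℝ)
    (hK : X n y 1 + ∑ i ∈ Icc 1 n, X n y (2*i+3) = 0)
    (hF : X n y 2 + ∑ j ∈ Icc 1 n, X n y (2*j+4) = 0)
    (hS : X n y 3 + X n y 4 + ∑ i ∈ Icc 1 n, X n y (2*i+3)
      + ∑ j ∈ Icc 1 n, X n y (2*j+4) = 0) :
    ∃ u : Fin (2*n+2) → ℝ, (Gamma n).mulVec u = y := by
  refine ⟨uVec n y, ?_⟩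
  have key : ∀ m, 1 ≤ m → m ≤ 2*n+4 →
      X n ((Gamma n).mulVec (uVec n y)) m = X n y m := by
    intro m h1 h2
    by_cases hm1 : m = 1
    · subst hm1
      rw [comp1 n hn (uVec n y), W_uVec_low n y (n+1) (by omega) (by omega),
        W_uVec_low n y 1 (by omega) (by omega)]
      rw [show (1:ℕ)-1 = 0 from rfl, show (n+1)-1 = n from rfl,
        Finset.Icc_eq_empty (by omega : ¬(1:ℕ) ≤ 0), Finset.sum_empty]
      linarith
    · by_cases hm2 : m = 2
      · subst hm2
        rw [comp2 n hn (uVec n y), W_uVec_high n y (2*n+2) (by omega) (by omega),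
          W_uVec_high n y (n+2) (by omega) (by omega),
          show 2*n+3-(2*n+2) = 1 by omega, show 2*n+3-(n+2) = n+1 by omega,
          Finset.Icc_eq_empty (by omega : ¬(n+1:ℕ) ≤ n), Finset.sum_empty]
        linarith
      · by_cases hm3 : m = 3
        · subst hm3
          rw [comp3 n hn (uVec n y), W_uVec_high n y (2*n+2) (by omega) (by omega),
            W_uVec_low n y 1 (by omega) (by omega),
            show 2*n+3-(2*n+2) = 1 by omega, show (1:ℕ)-1 = 0 from rfl,
            Finset.Icc_eq_empty (by omega : ¬(1:ℕ) ≤ 0), Finset.sum_empty]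
          linarith
        · by_cases hm4 : m = 4
          · subst hm4
            rw [comp4 n hn (uVec n y), W_uVec_low n y (n+1) (by omega) (by omega),
              W_uVec_high n y (n+2) (by omega) (by omega),
              show (n+1)-1 = n from rfl, show 2*n+3-(n+2) = n+1 by omega,
              Finset.Icc_eq_empty (by omega : ¬(n+1:ℕ) ≤ n), Finset.sum_empty]
            linarith
          · by_cases hpar : m % 2 = 1
            · set i := (m-3)/2 with hi
              have him : m = 2*i+3 := by omega
              have hi1 : 1 ≤ i := by omega
              have hi2 : i ≤ n := by omega
              rw [him, comp_odd n hn (uVec n y) i hi1 hi2,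
                W_uVec_low n y i (by omega) (by omega),
                W_uVec_low n y (i+1) (by omega) (by omega),
                show (i+1)-1 = i from rfl]
              have htel : ∑ j ∈ Icc 1 i, X n y (2*j+3)
                  = (∑ j ∈ Icc 1 (i-1), X n y (2*j+3)) + X n y (2*i+3) := by
                rw [show i = (i-1)+1 by omega, Finset.sum_Icc_succ_top (by omega),
                  show (i-1)+1-1 = i-1 by omega, show i-1+1 = i by omega]
              rw [htel]
              ring
            · set j := (m-4)/2 with hj
              have hjm : m = 2*j+4 := by omega
              have hj1 : 1 ≤ j := by omega
              have hj2 : j ≤ n := by omega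
              rw [hjm, comp_even n hn (uVec n y) j hj1 hj2,
                W_uVec_high n y (2*n+2-j) (by omega) (by omega),
                W_uVec_high n y (2*n+3-j) (by omega) (by omega),
                show 2*n+3-(2*n+2-j) = j+1 by omega,
                show 2*n+3-(2*n+3-j) = j by omega]
              have htel : ∑ t ∈ Icc j n, X n y (2*t+4)
                  = X n y (2*j+4) + ∑ t ∈ Icc (j+1) n, X n y (2*t+4) := by
                rw [show Icc j n = Ico j (n+1) from (Finset.Ico_add_one_right_eq_Icc j n).symm,
                  Finset.sum_eq_sum_Ico_succ_bot (by omega : j < n+1),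
                  Finset.Ico_add_one_right_eq_Icc]
              rw [htel]
              ring
  funext r
  have hr := r.isLt
  rw [X_apply n ((Gamma n).mulVec (uVec n y)) r, X_apply n y r]
  exact key ((r:ℕ)+1) (by omega) (by omega)

lemma steady_complex_odd (n : ℕ) (hn : 1 ≤ n) (k l : ℕ → ℝ)
    (hk : ∀ i, 1 ≤ i → i ≤ 2*n+1 → 0 < k i)
    (x : Fin (2*n+4) → ℝ) (v' : ℝ)
    (hWall : ∀ a, 1 ≤ a → a ≤ 2*n+2 → W n (Rvec n k l x) a = v') :
    ∀ i, 1 ≤ i → i ≤ n → X n x (2*i+3) = alphaC n k i * v' := by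
  have aux : ∀ t, t ≤ n-1 → X n x (2*(n-t)+3) = alphaC n k (n-t) * v' := by
    intro t
    induction t with
    | zero =>
      intro _
      have h := hWall (n+1) (by omega) (by omega)
      rw [WRn1 n hn k l x] at h
      have hkp := hk (2*n+1) (by omega) (by omega)
      rw [show n-0 = n from rfl, alphaC_n]
      apply mul_left_cancel₀ (ne_of_gt hkp)
      rw [h]
      field_simp
    | succ t ih =>
      intro ht
      have hprev := ih (by omega)
      set i := n-(t+1) with hidef
      have hii : i+1 = n-t := by omega
      have h := hWall (i+1) (by omega) (by omega)
      rw [WRmid n hn k l x i (by omega) (by omega)] at h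
      rw [show 2*i+5 = 2*(n-t)+3 by omega, hprev, ← hii] at h
      have hkp := hk (2*i+1) (by omega) (by omega)
      have hrec : k (2*i+1) * alphaC n k i = 1 + k (2*i+2) * alphaC n k (i+1) := by
        rw [alphaC_rec n k i (by omega) (by omega)]
        have hne := ne_of_gt (hk (2*i+1) (by omega) (by omega))
        field_simp
      apply mul_left_cancel₀ (ne_of_gt hkp)
      linear_combination h - v' * hrec
  intro i h1 h2
  have := aux (n-i) (by omega)
  rw [show n-(n-i) = i by omega] at this
  exact this

lemma steady_complex_even (n : ℕ) (hn : 1 ≤ n) (k l : ℕ → ℝ)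
    (hl : ∀ i, 1 ≤ i → i ≤ 2*n+1 → 0 < l i)
    (x : Fin (2*n+4) → ℝ) (v' : ℝ)
    (hWall : ∀ a, 1 ≤ a → a ≤ 2*n+2 → W n (Rvec n k l x) a = v') :
    ∀ j, 1 ≤ j → j ≤ n → X n x (2*j+4) = betaC l j * v' := by
  intro j
  induction j with
  | zero => omega
  | succ t ih =>
    intro _ h2
    by_cases ht : t = 0
    · subst ht
      have h := hWall (2*n+2) (by omega) (by omega)
      rw [WRlast n hn k l x] at h
      have hlp := hl 1 (by omega) (by omega)
      have hb1 : betaC l 1 = 1 / l 1 := rfl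
      rw [show 2*(0+1)+4 = 6 by norm_num, show (0:ℕ)+1 = 1 from rfl, hb1]
      apply mul_left_cancel₀ (ne_of_gt hlp)
      rw [h]
      field_simp
    · have hprev := ih (by omega) (by omega)
      have h := hWall (2*n+2-t) (by omega) (by omega)
      rw [WRback n hn k l x t (by omega) (by omega), hprev] at h
      have hlp := hl (2*t+1) (by omega) (by omega)
      have hrec : l (2*t+1) * betaC l (t+1) = 1 + l (2*t) * betaC l t := by
        rw [betaC_rec l t (by omega)]
        have hne := ne_of_gt (hl (2*t+1) (by omega) (by omega))
        field_simp
      rw [show 2*(t+1)+4 = 2*t+6 by ring]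
      apply mul_left_cancel₀ (ne_of_gt hlp)
      linear_combination h - v' * hrec

/-- Each stoichiometric compatibility class of the processive `n`-site system contains
exactly one steady state, and this steady state is positive. -/
theorem existence_uniqueness_of_steady_states (n : ℕ) (hn : 1 ≤ n) (k l : ℕ → ℝ)
    (hk : ∀ i, 1 ≤ i → i ≤ 2*n+1 → 0 < k i)
    (hl : ∀ i, 1 ≤ i → i ≤ 2*n+1 → 0 < l i)
    (x0 : Fin (2*n+4) → ℝ) (hx0 : ∀ i, 0 < x0 i) :
    ∃ η : Fin (2*n+4) → ℝ,
      ((∀ i, 0 ≤ η i) ∧ η - x0 ∈ LinearMap.range (Matrix.mulVecLin (Gamma n)) ∧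
        (Gamma n).mulVec (Rvec n k l η) = 0) ∧
      (∀ i, 0 < η i) ∧
      (∀ η' : Fin (2*n+4) → ℝ,
        ((∀ i, 0 ≤ η' i) ∧ η' - x0 ∈ LinearMap.range (Matrix.mulVecLin (Gamma n)) ∧
          (Gamma n).mulVec (Rvec n k l η') = 0) → η' = η) := by

  have hK1 := hk 1 (by omega) (by omega)
  have hK2 := hk 2 (by omega) (by omega)
  have hL1 := hl (2*n) (by omega) (by omega)
  have hL2 := hl (2*n+1) (by omega) (by omega)
  have hα1 := alphaC_pos n hn k hk 1 (by omega) (by omega)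
  have hβn := betaC_pos n hn l hl n (by omega) (by omega)
  set c : ℝ := (1 + k 2 * alphaC n k 1) / k 1 with hcdef0
  set d : ℝ := (1 + l (2*n) * betaC l n) / l (2*n+1) with hddef0
  set A : ℝ := ∑ i ∈ Icc 1 n, alphaC n k i with hAdef
  set B : ℝ := ∑ j ∈ Icc 1 n, betaC l j with hBdef
  set Kt : ℝ := X n x0 1 + ∑ i ∈ Icc 1 n, X n x0 (2*i+3) with hKtdef
  set Ft : ℝ := X n x0 2 + ∑ j ∈ Icc 1 n, X n x0 (2*j+4) with hFtdef
  set St : ℝ := X n x0 3 + X n x0 4 + ∑ i ∈ Icc 1 n, X n x0 (2*i+3)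
    + ∑ j ∈ Icc 1 n, X n x0 (2*j+4) with hStdef
  have hX0pos : ∀ m, 1 ≤ m → m ≤ 2*n+4 → 0 < X n x0 m := by
    intro m h1 h2; rw [X, dif_pos (by omega)]; exact hx0 _
  have hs0odd : 0 ≤ ∑ i ∈ Icc 1 n, X n x0 (2*i+3) :=
    Finset.sum_nonneg fun i hi => le_of_lt (hX0pos _ (by omega)
      (by have := (mem_Icc.mp hi).2; omega))
  have hs0even : 0 ≤ ∑ j ∈ Icc 1 n, X n x0 (2*j+4) :=
    Finset.sum_nonneg fun j hj => le_of_lt (hX0pos _ (by omega)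
      (by have := (mem_Icc.mp hj).2; omega))
  have hc : 0 < c := by rw [hcdef0]; positivity
  have hd : 0 < d := by rw [hddef0]; positivity
  have hA : 0 < A := by
    rw [hAdef]
    refine Finset.sum_pos (fun i hi => alphaC_pos n hn k hk i (mem_Icc.mp hi).1
      (mem_Icc.mp hi).2) ⟨1, mem_Icc.mpr ⟨le_refl 1, hn⟩⟩
  have hB : 0 < B := by
    rw [hBdef]
    refine Finset.sum_pos (fun j hj => betaC_pos n hn l hl j (mem_Icc.mp hj).1
      (mem_Icc.mp hj).2) ⟨1, mem_Icc.mpr ⟨le_refl 1, hn⟩⟩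
  have hKt : 0 < Kt := by
    rw [hKtdef]; have := hX0pos 1 (by omega) (by omega); linarith
  have hFt : 0 < Ft := by
    rw [hFtdef]; have := hX0pos 2 (by omega) (by omega); linarith
  have hSt : 0 < St := by
    rw [hStdef]
    have h3 := hX0pos 3 (by omega) (by omega)
    have h4 := hX0pos 4 (by omega) (by omega)
    linarith
  obtain ⟨v, ⟨hv0, hvK, hvF, hveq⟩, huniq⟩ :=
    root_exists_unique c d A B Kt Ft St hc hd hA hB hKt hFt hSt
  have hKv : 0 < Kt - A*v := by linarith
  have hFv : 0 < Ft - B*v := by linarith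
  set η : Fin (2*n+4) → ℝ := etaVec n k l Kt Ft c d A B v with hηdef
  have hcdef : k 1 * c = 1 + k 2 * alphaC n k 1 := by
    rw [hcdef0]; field_simp
  have hddef : l (2*n+1) * d = 1 + l (2*n) * betaC l n := by
    rw [hddef0]; field_simp
  have hXη : ∀ m, 1 ≤ m → m ≤ 2*n+4 → 0 < X n η m := by
    intro m h1 h2
    rw [hηdef, X_eta n k l Kt Ft c d A B v m h1 h2]
    split_ifs with e1 e2 e3 e4 e5
    · exact hKv
    · exact hFv
    · positivity
    · positivity
    · have : 0 < alphaC n k ((m-3)/2) := alphaC_pos n hn k hk _ (by omega) (by omega)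
      positivity
    · have : 0 < betaC l ((m-4)/2) := betaC_pos n hn l hl _ (by omega) (by omega)
      positivity
  have hηpos : ∀ i, 0 < η i := by
    intro r
    have hr := r.isLt
    rw [X_apply n η r]
    exact hXη _ (by omega) (by omega)
  have hsteadyη : (Gamma n).mulVec (Rvec n k l η) = 0 :=
    steady_of_const n hn _ v (eta_steady n hn k l hk hl Kt Ft c d A B v
      (ne_of_gt hKv) (ne_of_gt hFv) hcdef hddef)
  have hsumηodd : ∑ i ∈ Icc 1 n, X n η (2*i+3) = A * v := by
    rw [Finset.sum_congr rfl (fun i hi => by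
      rw [hηdef, X_eta_odd n k l Kt Ft c d A B v i (mem_Icc.mp hi).1 (mem_Icc.mp hi).2]),
      ← Finset.sum_mul, ← hAdef]
  have hsumηeven : ∑ j ∈ Icc 1 n, X n η (2*j+4) = B * v := by
    rw [Finset.sum_congr rfl (fun j hj => by
      rw [hηdef, X_eta_even n k l Kt Ft c d A B v j (mem_Icc.mp hj).1 (mem_Icc.mp hj).2]),
      ← Finset.sum_mul, ← hBdef]
  have hXη1 : X n η 1 = Kt - A*v := by rw [hηdef]; exact X_eta1 n k l Kt Ft c d A B v
  have hXη2 : X n η 2 = Ft - B*v := by rw [hηdef]; exact X_eta2 n k l Kt Ft c d A B v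
  have hXη3 : X n η 3 = c*v/(Kt-A*v) := by rw [hηdef]; exact X_eta3 n k l Kt Ft c d A B v
  have hXη4 : X n η 4 = d*v/(Ft-B*v) := by rw [hηdef]; exact X_eta4 n k l Kt Ft c d A B v
  have hYK : X n (η - x0) 1 + ∑ i ∈ Icc 1 n, X n (η - x0) (2*i+3) = 0 := by
    rw [X_sub, Finset.sum_congr rfl (fun i _ => X_sub n η x0 (2*i+3)),
      Finset.sum_sub_distrib, hsumηodd, hXη1, hKtdef]
    ring
  have hYF : X n (η - x0) 2 + ∑ j ∈ Icc 1 n, X n (η - x0) (2*j+4) = 0 := by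
    rw [X_sub, Finset.sum_congr rfl (fun j _ => X_sub n η x0 (2*j+4)),
      Finset.sum_sub_distrib, hsumηeven, hXη2, hFtdef]
    ring
  have hYS : X n (η - x0) 3 + X n (η - x0) 4 + ∑ i ∈ Icc 1 n, X n (η - x0) (2*i+3)
      + ∑ j ∈ Icc 1 n, X n (η - x0) (2*j+4) = 0 := by
    rw [X_sub, X_sub, Finset.sum_congr rfl (fun i _ => X_sub n η x0 (2*i+3)),
      Finset.sum_congr rfl (fun j _ => X_sub n η x0 (2*j+4)),
      Finset.sum_sub_distrib, Finset.sum_sub_distrib, hsumηodd, hsumηeven, hXη3, hXη4]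
    have hSt' : St = X n x0 3 + X n x0 4 + ∑ i ∈ Icc 1 n, X n x0 (2*i+3)
      + ∑ j ∈ Icc 1 n, X n x0 (2*j+4) := hStdef
    linarith [hveq]
  obtain ⟨u, hu⟩ := range_of_cons n hn (η - x0) hYK hYF hYS
  refine ⟨η, ⟨fun i => le_of_lt (hηpos i),
    LinearMap.mem_range.mpr ⟨u, by rw [Matrix.mulVecLin_apply]; exact hu⟩,
    hsteadyη⟩, hηpos, ?_⟩
  rintro η' ⟨hη'0, hrange', hsteady'⟩
  obtain ⟨u', hu'⟩ := LinearMap.mem_range.mp hrange'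
  rw [Matrix.mulVecLin_apply] at hu'
  have hconst := const_of_steady n hn _ hsteady'
  set v' : ℝ := W n (Rvec n k l η') 1 with hv'def
  have hWall : ∀ a, 1 ≤ a → a ≤ 2*n+2 → W n (Rvec n k l η') a = v' :=
    fun a h1 h2 => hconst a h1 h2
  have hX'0 : ∀ m, 0 ≤ X n η' m := by
    intro m; rw [X]; split
    · exact hη'0 _
    · exact le_refl 0
  have hodd' := steady_complex_odd n hn k l hk η' v' hWall
  have heven' := steady_complex_even n hn k l hl η' v' hWall
  have hv'0 : 0 ≤ v' := by
    have h := hWall (n+1) (by omega) (by omega)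
    rw [WRn1 n hn k l η'] at h
    have hkp := hk (2*n+1) (by omega) (by omega)
    nlinarith [hX'0 (2*n+3)]
  have hsum'odd : ∑ i ∈ Icc 1 n, X n η' (2*i+3) = A * v' := by
    rw [Finset.sum_congr rfl (fun i hi => hodd' i (mem_Icc.mp hi).1 (mem_Icc.mp hi).2),
      ← Finset.sum_mul, ← hAdef]
  have hsum'even : ∑ j ∈ Icc 1 n, X n η' (2*j+4) = B * v' := by
    rw [Finset.sum_congr rfl (fun j hj => heven' j (mem_Icc.mp hj).1 (mem_Icc.mp hj).2),
      ← Finset.sum_mul, ← hBdef]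
  have hcK := consK n hn u'
  rw [hu', X_sub, Finset.sum_congr rfl (fun i _ => X_sub n η' x0 (2*i+3)),
    Finset.sum_sub_distrib] at hcK
  have hcF := consF n hn u'
  rw [hu', X_sub, Finset.sum_congr rfl (fun j _ => X_sub n η' x0 (2*j+4)),
    Finset.sum_sub_distrib] at hcF
  have hcS := consS n hn u'
  rw [hu', X_sub, X_sub, Finset.sum_congr rfl (fun i _ => X_sub n η' x0 (2*i+3)),
    Finset.sum_congr rfl (fun j _ => X_sub n η' x0 (2*j+4)),
    Finset.sum_sub_distrib, Finset.sum_sub_distrib] at hcS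
  have hKt' : Kt = X n x0 1 + ∑ i ∈ Icc 1 n, X n x0 (2*i+3) := hKtdef
  have hFt' : Ft = X n x0 2 + ∑ j ∈ Icc 1 n, X n x0 (2*j+4) := hFtdef
  have hSt' : St = X n x0 3 + X n x0 4 + ∑ i ∈ Icc 1 n, X n x0 (2*i+3)
    + ∑ j ∈ Icc 1 n, X n x0 (2*j+4) := hStdef
  have hx1 : X n η' 1 = Kt - A*v' := by linarith [hcK, hsum'odd]
  have hx2 : X n η' 2 = Ft - B*v' := by linarith [hcF, hsum'even]
  have hp1 : X n η' 1 * X n η' 3 = c * v' := by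
    have h := hWall 1 (by omega) (by omega)
    rw [WR1 n hn k l η'] at h
    have h5 : X n η' 5 = alphaC n k 1 * v' := by
      have h' := hodd' 1 (by omega) (by omega)
      rw [show 2*1+3 = 5 by norm_num] at h'
      exact h'
    rw [h5] at h
    apply mul_left_cancel₀ (ne_of_gt hK1)
    linear_combination h - v' * hcdef
  have hp2 : X n η' 2 * X n η' 4 = d * v' := by
    have h := hWall (n+2) (by omega) (by omega)
    rw [WRn2 n hn k l η'] at h
    have h6 : X n η' (2*n+4) = betaC l n * v' := heven' n (by omega) (by omega)
    rw [h6] at h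
    apply mul_left_cancel₀ (ne_of_gt hL2)
    linear_combination h - v' * hddef
  have hx1pos : 0 < X n η' 1 := by
    rcases (hX'0 1).lt_or_eq with h | h
    · exact h
    · exfalso
      have h3 : c * v' = 0 := by rw [← hp1, ← h, zero_mul]
      have hv'' : v' = 0 := by
        rcases mul_eq_zero.mp h3 with h' | h'
        · exact absurd h' (ne_of_gt hc)
        · exact h'
      rw [hv''] at hx1
      rw [← h] at hx1
      simp at hx1
      linarith
  have hx2pos : 0 < X n η' 2 := by
    rcases (hX'0 2).lt_or_eq with h | h
    · exact h
    · exfalso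
      have h3 : d * v' = 0 := by rw [← hp2, ← h, zero_mul]
      have hv'' : v' = 0 := by
        rcases mul_eq_zero.mp h3 with h' | h'
        · exact absurd h' (ne_of_gt hd)
        · exact h'
      rw [hv''] at hx2
      rw [← h] at hx2
      simp at hx2
      linarith
  have e3 : X n η' 3 = c*v'/(Kt - A*v') := by
    rw [← hx1, eq_div_iff (ne_of_gt hx1pos)]
    linear_combination hp1
  have e4 : X n η' 4 = d*v'/(Ft - B*v') := by
    rw [← hx2, eq_div_iff (ne_of_gt hx2pos)]
    linear_combination hp2
  have hgv' : c*v'/(Kt-A*v') + d*v'/(Ft-B*v') + (A+B)*v' = St := by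
    rw [← e3, ← e4]
    linarith [hcS, hsum'odd, hsum'even]
  have hv'eq : v' = v := huniq v' hv'0 (by linarith [hx1pos, hx1])
    (by linarith [hx2pos, hx2]) hgv'
  have hXeqfin : ∀ m, 1 ≤ m → m ≤ 2*n+4 → X n η' m = X n η m := by
    intro m h1 h2
    rw [hηdef, X_eta n k l Kt Ft c d A B v m h1 h2]
    split_ifs with f1 f2 f3 f4 f5
    · subst f1; rw [hx1, hv'eq]
    · subst f2; rw [hx2, hv'eq]
    · subst f3; rw [e3, hv'eq]
    · subst f4; rw [e4, hv'eq]
    · have h' := hodd' ((m-3)/2) (by omega) (by omega)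
      rw [← show m = 2*((m-3)/2)+3 by omega] at h'
      rw [h', hv'eq]
    · have h' := heven' ((m-4)/2) (by omega) (by omega)
      rw [← show m = 2*((m-4)/2)+4 by omega] at h'
      rw [h', hv'eq]
  funext r
  have hr := r.isLt
  rw [X_apply n η' r, X_apply n η r]
  exact hXeqfin _ (by omega) (by omega)


end
end

section
/- Let σ ∈ ℝ^{2n+4} have all coordinates nonnegative and satisfy σ₁ + σ₅ + σ₇ + ⋯ + σ_{2n+3} > 0 (positive total kinase). Then there is no nondegenerate interval I ⊆ ℝ and differentiable curve c : I → ℝ^{2n+2} such that, for all t ∈ I: c′(t) = R(σ + Γ·c(t)), all coordinates of σ + Γ·c(t) are nonnegative, and σ₁ − c₁(t) + c_{n+1}(t) = 0. -/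
open Matrix Finset

noncomputable section

lemma X_apply_s14 (n : ℕ) (x : Fin (2*n+4) → ℝ) {m j : ℕ} (hm : m - 1 = j) (hj : j < 2*n+4) :
    X n x m = x ⟨j, hj⟩ := by
  subst hm; exact dif_pos hj

lemma Gamma_row_zero (n : ℕ) (hn : 1 ≤ n) (r : Fin (2*n+4)) (hr : (r:ℕ) = 0)
    (c0 : Fin (2*n+2)) :
    Gamma n r c0 =
      (if (c0 : ℕ) = 0 then -1 else 0) + (if (c0 : ℕ) = n then 1 else 0) := by
  simp only [Gamma, Matrix.of_apply, E, Pi.sub_apply, Pi.add_apply]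
  split_ifs <;> simp only [E, Pi.sub_apply, Pi.add_apply] <;>
    split_ifs <;> (try norm_num) <;> omega

lemma Gamma_row_odd (n : ℕ) (i : ℕ) (hi : i < n) (r : Fin (2*n+4)) (hr : (r:ℕ) = 2*i+4)
    (c0 : Fin (2*n+2)) :
    Gamma n r c0 =
      (if (c0 : ℕ) = i then 1 else 0) - (if (c0 : ℕ) = i+1 then 1 else 0) := by
  simp only [Gamma, Matrix.of_apply, E, Pi.sub_apply, Pi.add_apply]
  split_ifs <;> simp only [E, Pi.sub_apply, Pi.add_apply] <;>
    split_ifs <;> (try norm_num) <;> omega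

lemma Gamma_mulVec_zero (n : ℕ) (hn : 1 ≤ n) (v : Fin (2*n+2) → ℝ)
    (h0 : (0:ℕ) < 2*n+4) (h1 : (0:ℕ) < 2*n+2) (h2 : n < 2*n+2) :
    (Gamma n).mulVec v ⟨0, h0⟩ = - v ⟨0, h1⟩ + v ⟨n, h2⟩ := by
  have hpt : ∀ c0 : Fin (2*n+2), Gamma n ⟨0,h0⟩ c0 * v c0 =
      (if c0 = (⟨0, h1⟩ : Fin (2*n+2)) then -v c0 else 0)
      + (if c0 = (⟨n, h2⟩ : Fin (2*n+2)) then v c0 else 0) := by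
    intro c0
    rw [Gamma_row_zero n hn ⟨0,h0⟩ rfl c0]
    simp only [Fin.ext_iff]
    split_ifs <;> ring
  show ∑ c0, Gamma n ⟨0,h0⟩ c0 * v c0 = _
  rw [Finset.sum_congr rfl (fun c0 _ => hpt c0), Finset.sum_add_distrib,
    Finset.sum_ite_eq' Finset.univ, Finset.sum_ite_eq' Finset.univ]
  simp

lemma Gamma_mulVec_odd (n : ℕ) (i : ℕ) (hi : i < n) (v : Fin (2*n+2) → ℝ)
    (h0 : 2*i+4 < 2*n+4) (h1 : i < 2*n+2) (h2 : i+1 < 2*n+2) :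
    (Gamma n).mulVec v ⟨2*i+4, h0⟩ = v ⟨i, h1⟩ - v ⟨i+1, h2⟩ := by
  have hpt : ∀ c0 : Fin (2*n+2), Gamma n ⟨2*i+4,h0⟩ c0 * v c0 =
      (if c0 = (⟨i, h1⟩ : Fin (2*n+2)) then v c0 else 0)
      - (if c0 = (⟨i+1, h2⟩ : Fin (2*n+2)) then v c0 else 0) := by
    intro c0
    rw [Gamma_row_odd n i hi ⟨2*i+4,h0⟩ rfl c0]
    simp only [Fin.ext_iff]
    split_ifs <;> ring
  show ∑ c0, Gamma n ⟨2*i+4,h0⟩ c0 * v c0 = _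
  rw [Finset.sum_congr rfl (fun c0 _ => hpt c0), Finset.sum_sub_distrib,
    Finset.sum_ite_eq' Finset.univ, Finset.sum_ite_eq' Finset.univ]
  simp

lemma Rvec_apply_zero (n : ℕ) (k l : ℕ → ℝ) (x : Fin (2*n+4) → ℝ)
    (a0 : Fin (2*n+2)) (h : (a0:ℕ) = 0) :
    Rvec n k l x a0 = k 1 * X n x 1 * X n x 3 - k 2 * X n x 5 := by
  simp only [Rvec, h]
  norm_num

lemma Rvec_apply_n (n : ℕ) (hn : 1 ≤ n) (k l : ℕ → ℝ) (x : Fin (2*n+4) → ℝ)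
    (a0 : Fin (2*n+2)) (h : (a0:ℕ) = n) :
    Rvec n k l x a0 = k (2*n+1) * X n x (2*n+3) := by
  simp only [Rvec, h]
  rw [if_neg (by omega), if_neg (by omega), if_pos trivial]

lemma Rvec_apply_mid (n : ℕ) (k l : ℕ → ℝ) (x : Fin (2*n+4) → ℝ) (i : ℕ)
    (hi1 : 1 ≤ i) (hi2 : i + 1 ≤ n) (a0 : Fin (2*n+2)) (h : (a0:ℕ) = i) :
    Rvec n k l x a0 = k (2*i+1) * X n x (2*i+3) - k (2*i+2) * X n x (2*i+5) := by
  simp only [Rvec, h]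
  rw [if_neg (by omega), if_pos (by omega)]
  norm_num

lemma hasDerivAt_coord {m : ℕ} {c : ℝ → Fin m → ℝ} {v : Fin m → ℝ} {t : ℝ}
    (h : HasDerivAt c v t) (j : Fin m) :
    HasDerivAt (fun s => c s j) (v j) t :=
  hasDerivAt_pi.mp h j

lemma deriv_zero_of_loc {φ : ℝ → ℝ} {d t a b : ℝ} (h : HasDerivAt φ d t)
    (ht : t ∈ Set.Ioo a b) (h0 : ∀ s ∈ Set.Ioo a b, φ s = 0) : d = 0 := by
  have heq : φ =ᶠ[nhds t] fun _ => 0 :=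
    Filter.eventuallyEq_of_mem (Ioo_mem_nhds ht.1 ht.2) h0
  have h2 : HasDerivAt φ 0 t :=
    (hasDerivAt_const t (0:ℝ)).congr_of_eventuallyEq heq
  exact h.unique h2

lemma entry_congr {N : ℕ} (x : Fin N → ℝ) {a b : ℕ} (h : a = b) (ha : a < N) (hb : b < N) :
    x ⟨a, ha⟩ = x ⟨b, hb⟩ := by
  congr 1
  exact Fin.ext h

/-- If the total amount of kinase `σ₁ + σ₅ + σ₇ + ⋯ + σ_{2n+3}` in the nonnegative
initial condition `σ` is positive, then there is no differentiable curve `c` on a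
nondegenerate interval `I` solving `c' = R(σ + Γ·c)` with `σ + Γ·c(t)` nonnegative along
which the first coordinate `σ₁ - c₁ + c_{n+1}` of `σ + Γ·c` vanishes identically. -/
theorem free_kinase_not_identically_zero (n : ℕ) (hn : 1 ≤ n) (k l : ℕ → ℝ)
    (hk : ∀ i, 1 ≤ i → i ≤ 2*n+1 → 0 < k i)
    (hl : ∀ i, 1 ≤ i → i ≤ 2*n+1 → 0 < l i)
    (σ : Fin (2*n+4) → ℝ) (hσ : ∀ i, 0 ≤ σ i)
    (hK : 0 < X n σ 1 + ∑ i ∈ Finset.range n, X n σ (2*i+5)) :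
    ¬ ∃ (I : Set ℝ) (c : ℝ → Fin (2*n+2) → ℝ),
        I.OrdConnected ∧ (∃ t0 ∈ I, ∃ t1 ∈ I, t0 < t1) ∧
        ∀ t ∈ I,
          HasDerivAt c (Rvec n k l (σ + (Gamma n).mulVec (c t))) t ∧
          (∀ i, 0 ≤ (σ + (Gamma n).mulVec (c t)) i) ∧
          σ ⟨0, by omega⟩ - c t ⟨0, by omega⟩ + c t ⟨n, by omega⟩ = 0 := by

  rintro ⟨I, c, hI, ⟨t0, ht0, t1, ht1, hlt⟩, hsol⟩
  have hb0 : (0:ℕ) < 2*n+4 := by omega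
  have hb0' : (0:ℕ) < 2*n+2 := by omega
  have hbn : n < 2*n+2 := by omega
  have hJ : Set.Ioo t0 t1 ⊆ I := fun s hs => hI.out ht0 ht1 ⟨hs.1.le, hs.2.le⟩
  have hx0 : ∀ t, t ∈ I → (σ + (Gamma n).mulVec (c t)) ⟨0, hb0⟩ = 0 := by
    intro t ht
    have h3 := (hsol t ht).2.2
    simp only [Pi.add_apply, Gamma_mulVec_zero n hn (c t) hb0 hb0' hbn]
    linarith
  have hxodd : ∀ t, ∀ i, ∀ (hi : i < n), (σ + (Gamma n).mulVec (c t)) ⟨2*i+4, by omega⟩ =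
      σ ⟨2*i+4, by omega⟩ + (c t ⟨i, by omega⟩ - c t ⟨i+1, by omega⟩) := by
    intro t i hi
    simp only [Pi.add_apply, Gamma_mulVec_odd n i hi (c t) (by omega) (by omega) (by omega)]
  have hnonneg : ∀ t, t ∈ I → ∀ (j : Fin (2*n+4)), 0 ≤ (σ + (Gamma n).mulVec (c t)) j :=
    fun t ht => (hsol t ht).2.1
  have hstep0 : ∀ t, t ∈ Set.Ioo t0 t1 →
      (σ + (Gamma n).mulVec (c t)) ⟨4, by omega⟩ = 0 := by
    intro t ht
    have hd := (hsol t (hJ ht)).1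
    have hd0 := hasDerivAt_coord hd ⟨0, hb0'⟩
    have hdn := hasDerivAt_coord hd ⟨n, hbn⟩
    have hgd := ((hasDerivAt_const t (σ ⟨0, hb0⟩)).sub hd0).add hdn
    have hz := deriv_zero_of_loc hgd ht (fun s hs => (hsol s (hJ hs)).2.2)
    rw [Rvec_apply_zero n k l _ _ rfl, Rvec_apply_n n hn k l _ _ rfl,
        X_apply_s14 n _ (show (1:ℕ)-1 = 0 by omega) hb0,
        X_apply_s14 n _ (show (5:ℕ)-1 = 4 by omega) (by omega),
        X_apply_s14 n _ (show 2*n+3-1 = 2*n+2 by omega) (by omega),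
        hx0 t (hJ ht)] at hz
    have h4 := hnonneg t (hJ ht) ⟨4, by omega⟩
    have htop := hnonneg t (hJ ht) ⟨2*n+2, by omega⟩
    have hk2 := hk 2 (by omega) (by omega)
    have hktop := hk (2*n+1) (by omega) (by omega)
    have e1 : k 2 * (σ + (Gamma n).mulVec (c t)) ⟨4, by omega⟩ = 0 := by
      have p1 := mul_nonneg hk2.le h4
      have p2 := mul_nonneg hktop.le htop
      linarith
    exact (mul_eq_zero.mp e1).resolve_left (ne_of_gt hk2)
  have key : ∀ i, ∀ (hi : i < n), ∀ t, t ∈ Set.Ioo t0 t1 →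
      (σ + (Gamma n).mulVec (c t)) ⟨2*i+4, by omega⟩ = 0 := by
    intro i
    induction i using Nat.strong_induction_on with
    | _ i ih =>
      cases i with
      | zero =>
        intro hi t ht
        rw [entry_congr (σ + (Gamma n).mulVec (c t)) (show 2*0+4 = 4 by omega) (by omega) (by omega)]
        exact hstep0 t ht
      | succ j =>
        intro hi t ht
        have hj : j < n := by omega
        have hd := (hsol t (hJ ht)).1
        have hdj := hasDerivAt_coord hd ⟨j, by omega⟩
        have hdj1 := hasDerivAt_coord hd ⟨j+1, by omega⟩
        have hgd := (hasDerivAt_const t (σ ⟨2*j+4, by omega⟩)).add (hdj.sub hdj1)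
        have hz := deriv_zero_of_loc hgd ht (fun s hs => by
          have h2 := hxodd s j hj
          have h3 := ih j (by omega) hj s hs
          simp only [Pi.add_apply, Pi.sub_apply]
          linarith)
        by_cases hj0 : j = 0
        · subst hj0
          rw [Rvec_apply_zero n k l _ _ rfl,
              Rvec_apply_mid n k l _ 1 le_rfl (by omega) _ rfl,
              X_apply_s14 n _ (show (1:ℕ)-1 = 0 by omega) hb0,
              X_apply_s14 n _ (show (5:ℕ)-1 = 4 by omega) (by omega)] at hz
          try rw [X_apply_s14 n _ (show 2*1+3-1 = 4 by omega) (by omega)] at hz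
          rw [X_apply_s14 n _ (show 2*1+5-1 = 6 by omega) (by omega),
              hx0 t (hJ ht), hstep0 t ht] at hz
          have hk4 := hk (2*1+2) (by omega) (by omega)
          have e2 : k (2*1+2) * (σ + (Gamma n).mulVec (c t)) ⟨6, by omega⟩ = 0 := by linarith
          rw [entry_congr (σ + (Gamma n).mulVec (c t)) (show 2*(0+1)+4 = 6 by omega) (by omega) (by omega)]
          exact (mul_eq_zero.mp e2).resolve_left (ne_of_gt hk4)
        · rw [Rvec_apply_mid n k l _ j (by omega) (by omega) _ rfl,
              Rvec_apply_mid n k l _ (j+1) (by omega) (by omega) _ rfl,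
              X_apply_s14 n _ (show 2*j+3-1 = 2*j+2 by omega) (by omega),
              X_apply_s14 n _ (show 2*j+5-1 = 2*j+4 by omega) (by omega)] at hz
          try rw [X_apply_s14 n _ (show 2*(j+1)+3-1 = 2*j+4 by omega) (by omega)] at hz
          rw [X_apply_s14 n _ (show 2*(j+1)+5-1 = 2*j+6 by omega) (by omega)] at hz
          have ej1 := ih j (by omega) hj t ht
          have ej0 : (σ + (Gamma n).mulVec (c t)) ⟨2*j+2, by omega⟩ = 0 := by
            have h := ih (j-1) (by omega) (by omega) t ht
            rwa [entry_congr (σ + (Gamma n).mulVec (c t)) (show 2*(j-1)+4 = 2*j+2 by omega) (by omega) (by omega)] at h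
          rw [ej1, ej0] at hz
          have hkc := hk (2*(j+1)+2) (by omega) (by omega)
          have e2 : k (2*(j+1)+2) * (σ + (Gamma n).mulVec (c t)) ⟨2*j+6, by omega⟩ = 0 := by
            linarith
          rw [entry_congr (σ + (Gamma n).mulVec (c t)) (show 2*(j+1)+4 = 2*j+6 by omega) (by omega) (by omega)]
          exact (mul_eq_zero.mp e2).resolve_left (ne_of_gt hkc)
  obtain ⟨tm, htm⟩ : ∃ tm, tm ∈ Set.Ioo t0 t1 :=
    ⟨(t0+t1)/2, Set.mem_Ioo.mpr ⟨by linarith, by linarith⟩⟩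
  have htmI := hJ htm
  have hc0 : σ ⟨0, hb0⟩ - c tm ⟨0, hb0'⟩ + c tm ⟨n, hbn⟩ = 0 := (hsol tm htmI).2.2
  set f : ℕ → ℝ := fun j => if h : j < 2*n+2 then c tm ⟨j, h⟩ else 0 with hf
  have hfval : ∀ j (hj : j < 2*n+2), f j = c tm ⟨j, hj⟩ := by
    intro j hj
    simp only [hf]
    rw [dif_pos hj]
  have hsum : ∑ i ∈ Finset.range n, X n σ (2*i+5) = f n - f 0 := by
    rw [← Finset.sum_range_sub f n]
    apply Finset.sum_congr rfl
    intro i hi'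
    have hi := Finset.mem_range.mp hi'
    have h1 := key i hi tm htm
    rw [hxodd tm i hi] at h1
    rw [X_apply_s14 n σ (show 2*i+5-1 = 2*i+4 by omega) (by omega),
        hfval (i+1) (by omega), hfval i (by omega)]
    linarith
  have hK1 : X n σ 1 = σ ⟨0, hb0⟩ := X_apply_s14 n σ (by omega) hb0
  rw [hK1, hsum, hfval n hbn, hfval 0 hb0'] at hK
  linarith

end
end
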